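/- For every n ≥ 2, the degree 3 Steiner subratio of Euclidean space ℝⁿ equals √3/2: the infimum of mf(M) / smt(M) over all subsets M ⊆ ℝⁿ with 2 ≤ |M| ≤ 3 (with the Euclidean metric) is √3/2, and this infimum is attained when M is the vertex set of an equilateral triangle. -/

import Mathlib

open SimpleGraph Finset

structure IsPseudoMetric {M : Type} (ρ : M → M → ℝ) : Prop where
  nonneg : ∀ p q, 0 ≤ ρ p q
  refl : ∀ p, ρ p p = 0
  symm : ∀ p q, ρ p q = ρ q p
  triangle : ∀ p q r, ρ p r ≤ ρ p q + ρ q r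

/-- A tree joining a finite set `M`: a finite tree `G = (V, E)` with an injection `ι : M → V`
such that every vertex of degree 1 or 2 lies in the image of `M`. -/
structure Frame (M : Type) where
  V : Type
  [fin : Fintype V]
  [deq : DecidableEq V]
  G : SimpleGraph V
  [dec : DecidableRel G.Adj]
  tree : G.IsTree
  ι : M → V
  inj : Function.Injective ι
  joins : ∀ v : V, G.degree v = 1 ∨ G.degree v = 2 → v ∈ Set.range ι

attribute [instance] Frame.fin Frame.deq Frame.dec

namespace Frame

variable {M : Type}

/-- The unique path between two vertices of the tree. -/
noncomputable def path (F : Frame M) (u v : F.V) : F.G.Walk u v :=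
  (F.tree.existsUnique_path u v).exists.choose

/-- `d_ω(u,v)`: the sum of the weights of the edges of the unique path from `u` to `v`. -/
noncomputable def dist (F : Frame M) (w : Sym2 F.V → ℝ) (u v : F.V) : ℝ :=
  ((F.path u v).edges.map w).sum

/-- `ω(G)`: the total weight of all edges of the tree. -/
noncomputable def weight (F : Frame M) (w : Sym2 F.V → ℝ) : ℝ :=
  ∑ e ∈ F.G.edgeFinset, w e

/-- `(G, ω)` is a filling of `(M, ρ)`: nonnegative weights and `ρ p q ≤ d_ω(ι p, ι q)`. -/
def IsFilling (F : Frame M) (w : Sym2 F.V → ℝ) (ρ : M → M → ℝ) : Prop :=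
  (∀ e ∈ F.G.edgeFinset, 0 ≤ w e) ∧
  ∀ p q : M, ρ p q ≤ F.dist w (F.ι p) (F.ι q)

end Frame

/-- `mf(M,ρ)`: the infimum of weights of fillings of `(M, ρ)`. -/
noncomputable def mf {M : Type} (ρ : M → M → ℝ) : ℝ :=
  sInf { x | ∃ F : Frame M, ∃ w : Sym2 F.V → ℝ, F.IsFilling w ρ ∧ F.weight w = x }

/-- A minimal filling: a filling whose weight equals `mf(M,ρ)`. -/
def IsMinFilling {M : Type} (F : Frame M) (w : Sym2 F.V → ℝ) (ρ : M → M → ℝ) : Prop :=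
  F.IsFilling w ρ ∧ F.weight w = mf ρ

/- `mst(N,d)`: the length of a minimal spanning tree of a finite pseudo-metric space `(N, d)`:
the minimum over all spanning trees of the complete graph on `N` of the sum of the
lengths of their edges (each edge counted once, via the symmetrized double sum). -/
open Classical in
noncomputable def mstW {N : Type} [Fintype N] (d : N → N → ℝ) : ℝ :=
  sInf { x | ∃ H : SimpleGraph N, H.IsTree ∧
    x = (∑ u : N, ∑ v : N, if H.Adj u v then d u v else 0) / 2 }

/- `smt(M,d)`: the length of a Steiner minimal tree for a finite subset `M` of the space
`(X, d)`: the infimum of `mst(N, d)` over all finite `N` with `M ⊆ N ⊆ X`. -/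
noncomputable def smtW {X : Type} (d : X → X → ℝ) (S : Finset X) : ℝ :=
  sInf { x | ∃ N : Finset X, S ⊆ N ∧ x = mstW (fun p q : N => d p.1 q.1) }

/-- The degree `n` Steiner subratio of a space `X` with distance function `d`. -/
noncomputable def ssrN {X : Type} (d : X → X → ℝ) (n : ℕ) : ℝ :=
  sInf { r | ∃ S : Finset X, 2 ≤ S.card ∧ S.card ≤ n ∧
    r = mf (fun p q : S => d p.1 q.1) / smtW d S }


-- ===================== auxiliary development =====================
set_option linter.unusedSectionVars false
set_option linter.unusedVariables false
set_option maxHeartbeats 1000000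
open scoped RealInnerProductSpace

namespace MFAux

variable {α : Type*}

lemma multiset_sum_map_le {f : α → ℝ} {s t : Multiset α} (h : s ≤ t)
    (hf : ∀ x ∈ t, 0 ≤ f x) : (s.map f).sum ≤ (t.map f).sum := by
  obtain ⟨u, rfl⟩ := Multiset.le_iff_exists_add.mp h
  rw [Multiset.map_add, Multiset.sum_add]
  have : 0 ≤ (u.map f).sum := by
    apply Multiset.sum_nonneg
    intro x hx
    obtain ⟨y, hy, rfl⟩ := Multiset.mem_map.mp hx
    exact hf y (by simp [hy])
  linarith

lemma list_sum_map_le {f : α → ℝ} {l₁ l₂ : List α} (h1 : l₁.Nodup)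
    (hsub : ∀ x ∈ l₁, x ∈ l₂) (hf : ∀ x ∈ l₂, 0 ≤ f x) :
    (l₁.map f).sum ≤ (l₂.map f).sum := by
  have h : (l₁ : Multiset α) ≤ (l₂ : Multiset α) :=
    (Multiset.le_iff_subset (by exact h1)).mpr (by intro x hx; simpa using hsub x (by simpa using hx))
  simpa using multiset_sum_map_le h (by simpa using hf)

lemma list_sum_le_finset_sum [DecidableEq α] {f : α → ℝ} {l : List α} {s : Finset α}
    (h1 : l.Nodup) (hsub : ∀ x ∈ l, x ∈ s) (hf : ∀ x ∈ s, 0 ≤ f x) :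
    (l.map f).sum ≤ ∑ x ∈ s, f x := by
  have h : (l : Multiset α) ≤ s.val :=
    (Multiset.le_iff_subset (by exact h1)).mpr (by intro x hx; simpa [Finset.mem_def.symm] using hsub x (by simpa using hx))
  rw [Finset.sum_eq_multiset_sum]
  simpa using multiset_sum_map_le h (by intro x hx; exact hf x (by exact hx))

variable {V : Type*} [DecidableEq V] {G : SimpleGraph V}

/-- The chosen unique path in a tree; definitionally the same choice as `Frame.path`. -/
noncomputable def tpath (hG : G.IsTree) (u v : V) : G.Walk u v :=
  (hG.existsUnique_path u v).exists.choose

lemma tpath_isPath (hG : G.IsTree) (u v : V) : (tpath hG u v).IsPath :=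
  (hG.existsUnique_path u v).exists.choose_spec

lemma tpath_unique (hG : G.IsTree) {u v : V} (p : G.Walk u v) (hp : p.IsPath) :
    tpath hG u v = p :=
  ((hG.existsUnique_path u v).unique (tpath_isPath hG u v) hp)

/-- weighted tree distance, same definition as `Frame.dist`. -/
noncomputable def tdist (hG : G.IsTree) (w : Sym2 V → ℝ) (u v : V) : ℝ :=
  ((tpath hG u v).edges.map w).sum

lemma tdist_self (hG : G.IsTree) (w : Sym2 V → ℝ) (v : V) : tdist hG w v v = 0 := by
  rw [tdist, tpath_unique hG Walk.nil (Walk.IsPath.nil)]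
  simp

lemma tdist_le_walkSum (hG : G.IsTree) {w : Sym2 V → ℝ}
    (hw : ∀ e ∈ G.edgeSet, 0 ≤ w e) {u v : V} (p : G.Walk u v) :
    tdist hG w u v ≤ (p.edges.map w).sum := by
  rw [tdist, tpath_unique hG p.bypass p.bypass_isPath]
  exact list_sum_map_le (p.bypass_isPath.1.edges_nodup)
    (fun e he => p.edges_bypass_subset he)
    (fun e he => hw e (p.edges_subset_edgeSet he))

lemma tdist_comm (hG : G.IsTree) (w : Sym2 V → ℝ) (u v : V) :
    tdist hG w u v = tdist hG w v u := by
  rw [tdist, tdist, tpath_unique hG (tpath hG v u).reverse ((tpath_isPath hG v u).reverse)]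
  rw [Walk.edges_reverse, List.map_reverse, List.sum_reverse]

lemma tdist_triangle (hG : G.IsTree) {w : Sym2 V → ℝ}
    (hw : ∀ e ∈ G.edgeSet, 0 ≤ w e) (u m v : V) :
    tdist hG w u v ≤ tdist hG w u m + tdist hG w m v := by
  have := tdist_le_walkSum hG hw ((tpath hG u m).append (tpath hG m v))
  rwa [Walk.edges_append, List.map_append, List.sum_append] at this

lemma tdist_nonneg (hG : G.IsTree) {w : Sym2 V → ℝ}
    (hw : ∀ e ∈ G.edgeSet, 0 ≤ w e) (u v : V) : 0 ≤ tdist hG w u v := by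
  apply List.sum_nonneg
  intro x hx
  obtain ⟨e, he, rfl⟩ := List.mem_map.mp hx
  exact hw e ((tpath hG u v).edges_subset_edgeSet he)

lemma tdist_le_total [Fintype V] [DecidableRel G.Adj] (hG : G.IsTree) {w : Sym2 V → ℝ}
    (hw : ∀ e ∈ G.edgeSet, 0 ≤ w e) (u v : V) :
    tdist hG w u v ≤ ∑ e ∈ G.edgeFinset, w e := by
  refine list_sum_le_finset_sum (tpath_isPath hG u v).1.edges_nodup
    (fun e he => mem_edgeFinset.mpr ((tpath hG u v).edges_subset_edgeSet he))
    (fun e he => hw e (mem_edgeFinset.mp he))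

/-- Walking from `u`, the first vertex of the walk lying in the list `L`. -/
lemma exists_firstHit {u v : V} (p : G.Walk u v) (L : List V) (hv : v ∈ L) :
    ∃ (m : V) (q : G.Walk u m), m ∈ L ∧ (∀ x ∈ q.support, x ∈ L → x = m) ∧
      q.edges.Sublist p.edges ∧ (∀ x ∈ q.support, x ∈ p.support) := by
  induction p with
  | nil =>
    exact ⟨_, Walk.nil, hv, by simp, by simp, by simp⟩
  | @cons u b v h q ih =>
    by_cases hu : u ∈ L
    · refine ⟨u, Walk.nil, hu, by simp, List.nil_sublist _, by simp⟩
    · obtain ⟨m, q1, hm, honly, hsub, hsupp⟩ := ih hv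
      refine ⟨m, Walk.cons h q1, hm, ?_, ?_, ?_⟩
      · intro x hx hxL
        rw [Walk.support_cons, List.mem_cons] at hx
        rcases hx with rfl | hx
        · exact absurd hxL hu
        · exact honly x hx hxL
      · rw [Walk.edges_cons, Walk.edges_cons]
        exact hsub.cons₂ _
      · intro x hx
        rw [Walk.support_cons, List.mem_cons] at hx ⊢
        rcases hx with rfl | hx
        · exact Or.inl rfl
        · exact Or.inr (hsupp x hx)

/-- The median (tripod) bound: some vertex `m` has its three distances to `a`, `b`, `c`
summing to at most the total edge weight. -/
lemma median [Fintype V] [DecidableRel G.Adj] (hG : G.IsTree) {w : Sym2 V → ℝ}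
    (hw : ∀ e ∈ G.edgeSet, 0 ≤ w e) (a b c : V) :
    ∃ m : V, tdist hG w a m + tdist hG w b m + tdist hG w c m ≤ ∑ e ∈ G.edgeFinset, w e := by
  classical
  set p := tpath hG a b with hp
  obtain ⟨m, q1, hm, honly, hsub, hsupp⟩ :=
    exists_firstHit (tpath hG c a) p.support (Walk.start_mem_support p)
  refine ⟨m, ?_⟩
  have hmp : m ∈ p.support := hm
  have htake : tpath hG a m = p.takeUntil m hmp :=
    tpath_unique hG _ ((tpath_isPath hG a b).takeUntil hmp)
  have hdrop : tpath hG m b = p.dropUntil m hmp :=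
    tpath_unique hG _ ((tpath_isPath hG a b).dropUntil hmp)
  have hsplit : tdist hG w a m + tdist hG w m b = (p.edges.map w).sum := by
    rw [tdist, tdist, htake, hdrop, ← List.sum_append, ← List.map_append, ← Walk.edges_append,
      Walk.take_spec]
  have hbm : tdist hG w b m = tdist hG w m b := tdist_comm hG w b m
  have hcm : tdist hG w c m ≤ (q1.edges.map w).sum := tdist_le_walkSum hG hw q1
  have hq1nodup : q1.edges.Nodup := hsub.nodup (tpath_isPath hG c a).1.edges_nodup
  have hdisj : ∀ e ∈ p.edges, e ∉ q1.edges := by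
    intro e hep heq
    induction e with
    | h x y =>
      have hx1 : x ∈ q1.support := q1.fst_mem_support_of_mem_edges heq
      have hy1 : y ∈ q1.support := q1.snd_mem_support_of_mem_edges heq
      have hx2 : x ∈ p.support := p.fst_mem_support_of_mem_edges hep
      have hy2 : y ∈ p.support := p.snd_mem_support_of_mem_edges hep
      have hxm : x = m := honly x hx1 hx2
      have hym : y = m := honly y hy1 hy2
      subst hxm; subst hym
      exact G.irrefl (p.adj_of_mem_edges hep)
  have hcomb : (p.edges ++ q1.edges).Nodup := by
    rw [List.nodup_append]
    exact ⟨(tpath_isPath hG a b).1.edges_nodup, hq1nodup, fun e hep e' heq' heq => hdisj e hep (heq ▸ heq')⟩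
  have hfin : ((p.edges ++ q1.edges).map w).sum ≤ ∑ e ∈ G.edgeFinset, w e := by
    refine list_sum_le_finset_sum hcomb ?_ (fun e he => hw e (mem_edgeFinset.mp he))
    intro e he
    rw [List.mem_append] at he
    rcases he with he | he
    · exact mem_edgeFinset.mpr (p.edges_subset_edgeSet he)
    · exact mem_edgeFinset.mpr (q1.edges_subset_edgeSet he)
  rw [List.map_append, List.sum_append] at hfin
  linarith


variable {V : Type*} [DecidableEq V]

lemma double_sum_eq [Fintype V] (H : SimpleGraph V) [DecidableRel H.Adj]
    (f : V → V → ℝ) (hf : ∀ u v, f u v = f v u) :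
    (∑ u : V, ∑ v : V, if H.Adj u v then f u v else 0)
      = 2 * ∑ e ∈ H.edgeFinset, Sym2.lift ⟨f, fun a b => hf a b⟩ e := by
  have h0 : (∑ u : V, ∑ v : V, if H.Adj u v then f u v else 0)
      = ∑ p ∈ (univ ×ˢ univ).filter (fun p : V × V => H.Adj p.1 p.2), f p.1 p.2 := by
    rw [Finset.sum_filter, Finset.sum_product]
  have hmaps : ∀ p ∈ (univ ×ˢ univ).filter (fun p : V × V => H.Adj p.1 p.2),
      Sym2.mk p.1 p.2 ∈ H.edgeFinset := by
    intro p hp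
    rw [Finset.mem_filter] at hp
    exact mem_edgeFinset.mpr hp.2
  rw [h0, ← Finset.sum_fiberwise_of_maps_to hmaps (fun p => f p.1 p.2), Finset.mul_sum]
  refine Finset.sum_congr rfl ?_
  intro e he
  induction e with
  | h x y =>
    have hadj : H.Adj x y := mem_edgeFinset.mp he
    have hne : x ≠ y := H.ne_of_adj hadj
    have hfib : ((univ ×ˢ univ).filter (fun p : V × V => H.Adj p.1 p.2)).filter
        (fun p => Sym2.mk p.1 p.2 = s(x, y)) = {(x, y), (y, x)} := by
      ext p
      obtain ⟨p1, p2⟩ := p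
      simp only [Finset.mem_filter, Finset.mem_product, Finset.mem_univ, true_and,
        Finset.mem_insert, Finset.mem_singleton, Prod.mk.injEq, Sym2.eq_iff]
      constructor
      · rintro ⟨_, (⟨rfl, rfl⟩ | ⟨rfl, rfl⟩)⟩
        · exact Or.inl ⟨rfl, rfl⟩
        · exact Or.inr ⟨rfl, rfl⟩
      · rintro (⟨rfl, rfl⟩ | ⟨rfl, rfl⟩)
        · exact ⟨hadj, Or.inl ⟨rfl, rfl⟩⟩
        · exact ⟨hadj.symm, Or.inr ⟨rfl, rfl⟩⟩
    rw [hfib, Finset.sum_pair (by simp [hne, Prod.ext_iff] : ((x, y) : V × V) ≠ (y, x))]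
    simp only [Sym2.lift_mk]
    rw [hf y x]
    ring

/-- The star graph centered at `c`. -/
def starG (c : V) : SimpleGraph V where
  Adj u v := u ≠ v ∧ (u = c ∨ v = c)
  symm := ⟨by intro u v ⟨h1, h2⟩; exact ⟨h1.symm, h2.symm⟩⟩
  loopless := ⟨by intro u ⟨h1, _⟩; exact h1 rfl⟩

instance starG_decRel (c : V) : DecidableRel (starG c).Adj :=
  fun u v => inferInstanceAs (Decidable (u ≠ v ∧ (u = c ∨ v = c)))

lemma starG_adj {c u v : V} : (starG c).Adj u v ↔ u ≠ v ∧ (u = c ∨ v = c) := Iff.rfl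

lemma starG_isTree [Nonempty V] (c : V) : (starG c).IsTree := by
  constructor
  · constructor
    · intro u v
      have h : ∀ x : V, (starG c).Reachable x c := by
        intro x
        by_cases hx : x = c
        · rw [hx]
        · exact (Adj.reachable ⟨hx, Or.inr rfl⟩)
      exact (h u).trans (h v).symm
  · rw [isAcyclic_iff_forall_edge_isBridge]
    intro e he
    induction e with
    | h x y =>
      rw [mem_edgeSet] at he
      obtain ⟨hne, hc⟩ := he
      -- wlog structure: handle both cases directly
      have key : ∀ u : V, u ≠ c → (starG c).IsBridge s(u, c) := by
        intro u huc
        rw [isBridge_iff]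
        intro ⟨wlk⟩
        cases wlk with
        | nil => exact huc rfl
        | cons h q =>
          rename_i x' _
          rw [deleteEdges_adj, Set.mem_singleton_iff] at h
          obtain ⟨⟨h1, h2⟩, h3⟩ := h
          rcases h2 with rfl | rfl
          · exact (huc rfl).elim
          · exact h3 rfl
      rcases hc with rfl | rfl
      · have := key y hne.symm
        rwa [Sym2.eq_swap] at this
      · exact key x hne

lemma starG_edgeFinset [Fintype V] (c : V) :
    (starG c).edgeFinset = (univ.erase c).image (fun x => s(c, x)) := by
  ext e
  induction e with
  | h x y =>
    simp only [mem_edgeFinset, mem_edgeSet, starG_adj, Finset.mem_image, Finset.mem_erase,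
      Finset.mem_univ, and_true]
    constructor
    · rintro ⟨hne, (rfl | rfl)⟩
      · exact ⟨y, fun h => hne h.symm, rfl⟩
      · exact ⟨x, fun h => hne h, Sym2.eq_swap⟩
    · rintro ⟨z, hz, hzz⟩
      rw [Sym2.eq_iff] at hzz
      rcases hzz with ⟨rfl, rfl⟩ | ⟨rfl, rfl⟩
      · exact ⟨fun h => hz h.symm, Or.inl rfl⟩
      · exact ⟨hz, Or.inr rfl⟩

lemma starG_sum [Fintype V] (c : V) (w : Sym2 V → ℝ) :
    ∑ e ∈ (starG c).edgeFinset, w e = ∑ x ∈ univ.erase c, w s(c, x) := by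
  rw [starG_edgeFinset, Finset.sum_image]
  intro x hx y hy hxy
  rw [Sym2.eq_iff] at hxy
  rcases hxy with ⟨-, h⟩ | ⟨h1, h2⟩
  · exact h
  · exact h2.trans h1

lemma starG_degree_center [Fintype V] (c : V) :
    (starG c).degree c = Fintype.card V - 1 := by
  rw [← card_neighborFinset_eq_degree]
  have h : (starG c).neighborFinset c = univ.erase c := by
    ext v
    rw [mem_neighborFinset, Finset.mem_erase]
    constructor
    · rintro ⟨h1, -⟩
      exact ⟨fun hh => h1 hh.symm, Finset.mem_univ v⟩
    · rintro ⟨h1, -⟩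
      exact ⟨fun hh => h1 hh.symm, Or.inl rfl⟩
  rw [h, Finset.card_erase_of_mem (Finset.mem_univ c), Finset.card_univ]


variable {E : Type*} [NormedAddCommGroup E] [InnerProductSpace ℝ E]

lemma le_of_forall_pos_le {c K : ℝ} (hK : 0 < K) (h : ∀ t : ℝ, 0 < t → c ≤ t * K) :
    c ≤ 0 := by
  by_contra hc
  push_neg at hc
  have h1 := h (c / (2 * K)) (by positivity)
  have h2 : c / (2 * K) * K = c / 2 := by field_simp
  rw [h2] at h1
  linarith

lemma eq_of_sq_eq_sq {a b : ℝ} (ha : 0 ≤ a) (hb : 0 ≤ b) (h : a ^ 2 = b ^ 2) : a = b := by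
  nlinarith [sq_nonneg (a - b), sq_nonneg (a + b)]

lemma le_of_sq_le_sq' {a b : ℝ} (ha : 0 ≤ a) (hb : 0 ≤ b) (h : a ^ 2 ≤ b ^ 2) : a ≤ b := by
  nlinarith [sq_nonneg (a - b), sq_nonneg (a + b)]

lemma sqrt3_pos : 0 < Real.sqrt 3 := Real.sqrt_pos.mpr (by norm_num)

lemma sqrt3_sq : Real.sqrt 3 ^ 2 = 3 := Real.sq_sqrt (by norm_num)

lemma sqrt3_le_two : Real.sqrt 3 ≤ 2 := by
  nlinarith [sqrt3_sq, sqrt3_pos]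

/-- First-order expansion bound for the norm under perturbation. -/
lemma norm_perturb (v g : E) {t : ℝ} (ht : 0 ≤ t) (hv : v ≠ 0) :
    ‖v - t • g‖ ≤ ‖v‖ - t * ⟪v, g⟫ / ‖v‖ + t ^ 2 * ‖g‖ ^ 2 / ‖v‖ := by
  have hA : 0 < ‖v‖ := norm_pos_iff.mpr hv
  have hN2 : ‖v - t • g‖ ^ 2 = ‖v‖ ^ 2 - 2 * (t * ⟪v, g⟫) + t ^ 2 * ‖g‖ ^ 2 := by
    rw [norm_sub_sq_real, real_inner_smul_right, norm_smul]
    rw [mul_pow, Real.norm_eq_abs, sq_abs]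
  have hc : |⟪v, g⟫| ≤ ‖v‖ * ‖g‖ := abs_real_inner_le_norm v g
  have hcle : ⟪v, g⟫ ≤ ‖v‖ * ‖g‖ := (le_abs_self _).trans hc
  have hcge : -(‖v‖ * ‖g‖) ≤ ⟪v, g⟫ := neg_le_of_abs_le hc
  have hRHS : 0 ≤ ‖v‖ ^ 2 - t * ⟪v, g⟫ + t ^ 2 * ‖g‖ ^ 2 := by
    nlinarith [sq_nonneg (‖v‖ - 2 * t * ‖g‖), mul_le_mul_of_nonneg_left hcle ht,
      mul_le_mul_of_nonneg_left hcge ht]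
  have hsq : (‖v‖ * ‖v - t • g‖) ^ 2 ≤ (‖v‖ ^ 2 - t * ⟪v, g⟫ + t ^ 2 * ‖g‖ ^ 2) ^ 2 := by
    rw [mul_pow, hN2]
    nlinarith [sq_nonneg (t * ⟪v, g⟫ - t ^ 2 * ‖g‖ ^ 2), sq_nonneg (t * ‖g‖ * ‖v‖)]
  have hmain : ‖v‖ * ‖v - t • g‖ ≤ ‖v‖ ^ 2 - t * ⟪v, g⟫ + t ^ 2 * ‖g‖ ^ 2 :=
    le_of_sq_le_sq' (by positivity) hRHS hsq
  have hgoal : ‖v‖ - t * ⟪v, g⟫ / ‖v‖ + t ^ 2 * ‖g‖ ^ 2 / ‖v‖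
      = (‖v‖ ^ 2 - t * ⟪v, g⟫ + t ^ 2 * ‖g‖ ^ 2) / ‖v‖ := by
    field_simp
  rw [hgoal, le_div_iff₀ hA, mul_comm]
  exact hmain

lemma exists_min [ProperSpace E] (a b c : E) :
    ∃ m₀ : E, ∀ m : E, ‖a - m₀‖ + ‖b - m₀‖ + ‖c - m₀‖ ≤ ‖a - m‖ + ‖b - m‖ + ‖c - m‖ := by
  set f : E → ℝ := fun m => ‖a - m‖ + ‖b - m‖ + ‖c - m‖ with hf
  have hcont : Continuous f := by fun_prop
  set R := ‖b - a‖ + ‖c - a‖ with hR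
  have hRnn : 0 ≤ R := by positivity
  obtain ⟨m₀, hmem, hmin⟩ := (isCompact_closedBall a (R + 1)).exists_isMinOn
    ⟨a, Metric.mem_closedBall_self (by positivity)⟩ hcont.continuousOn
  refine ⟨m₀, fun m => ?_⟩
  by_cases hm : m ∈ Metric.closedBall a (R + 1)
  · exact hmin hm
  · have h1 : f m₀ ≤ f a := hmin (Metric.mem_closedBall_self (by positivity))
    have hfa : f a = R := by simp [hf, hR]
    have h2 : R + 1 < dist m a := by
      rw [Metric.mem_closedBall] at hm
      linarith [not_le.mp hm]
    have h3 : dist m a = ‖a - m‖ := by rw [_root_.dist_comm, dist_eq_norm]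
    have h4 : ‖a - m‖ ≤ f m := by
      have := norm_nonneg (b - m)
      have := norm_nonneg (c - m)
      simp only [hf]
      linarith
    simp only [hf] at h1 h4 hfa
    linarith




variable {E : Type*} [NormedAddCommGroup E] [InnerProductSpace ℝ E]

lemma norm_inv_smul_eq_one {v : E} (hv : v ≠ 0) : ‖‖v‖⁻¹ • v‖ = 1 := by
  have hA : 0 < ‖v‖ := norm_pos_iff.mpr hv
  rw [norm_smul, norm_inv, norm_norm, inv_mul_cancel₀ hA.ne']

lemma inner_self_unit {v : E} (hv : v ≠ 0) : ⟪v, ‖v‖⁻¹ • v⟫ = ‖v‖ := by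
  have hA : 0 < ‖v‖ := norm_pos_iff.mpr hv
  rw [real_inner_smul_right, real_inner_self_eq_norm_sq]
  field_simp
  all_goals ring

lemma inner_div_norm {v g : E} (hv : v ≠ 0) : ⟪v, g⟫ / ‖v‖ = ⟪‖v‖⁻¹ • v, g⟫ := by
  rw [real_inner_smul_left, div_eq_inv_mul]

lemma pair_inner_neg_half {x y z : E} (hsum : x + y + z = 0)
    (hx : ‖x‖ = 1) (hy : ‖y‖ = 1) (hz : ‖z‖ = 1) : ⟪x, y⟫ = -(1 / 2) := by
  have hz' : z = -(x + y) := by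
    have : (x + y) + z = 0 := by rw [← hsum]
    rw [eq_neg_iff_add_eq_zero, add_comm]
    exact this
  have h1 : ‖z‖ ^ 2 = ‖x‖ ^ 2 + 2 * ⟪x, y⟫ + ‖y‖ ^ 2 := by
    rw [hz', norm_neg, norm_add_sq_real]
  rw [hx, hy, hz] at h1
  norm_num at h1
  linarith

lemma norm_sub_unit_sqrt3 {x y : E} (hx : ‖x‖ = 1) (hy : ‖y‖ = 1)
    (hxy : ⟪x, y⟫ = -(1 / 2)) : ‖x - y‖ = Real.sqrt 3 := by
  have h : ‖x - y‖ ^ 2 = 3 := by rw [norm_sub_sq_real, hx, hy, hxy]; norm_num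
  rw [← Real.sqrt_sq (norm_nonneg (x - y)), h]

/-- Interior critical point case: minimizer distinct from all three vertices. -/
lemma interior_case (a b c m : E) (ha : a ≠ m) (hb : b ≠ m) (hc : c ≠ m)
    (hmin : ∀ x : E, ‖a - m‖ + ‖b - m‖ + ‖c - m‖ ≤ ‖a - x‖ + ‖b - x‖ + ‖c - x‖) :
    Real.sqrt 3 * (‖a - m‖ + ‖b - m‖ + ‖c - m‖) ≤ ‖a - b‖ + ‖a - c‖ + ‖b - c‖ := by
  have hA1 : 0 < ‖a - m‖ := norm_pos_iff.mpr (sub_ne_zero.mpr ha)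
  have hA2 : 0 < ‖b - m‖ := norm_pos_iff.mpr (sub_ne_zero.mpr hb)
  have hA3 : 0 < ‖c - m‖ := norm_pos_iff.mpr (sub_ne_zero.mpr hc)
  set u1 : E := ‖a - m‖⁻¹ • (a - m) with hu1
  set u2 : E := ‖b - m‖⁻¹ • (b - m) with hu2
  set u3 : E := ‖c - m‖⁻¹ • (c - m) with hu3
  set g : E := u1 + u2 + u3 with hgdef
  have hg : g = 0 := by
    by_contra hg0
    have hgn : 0 < ‖g‖ := norm_pos_iff.mpr hg0
    set K : ℝ := ‖g‖ ^ 2 / ‖a - m‖ + ‖g‖ ^ 2 / ‖b - m‖ + ‖g‖ ^ 2 / ‖c - m‖ with hK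
    have hKpos : 0 < K := by positivity
    have hstep : ∀ t : ℝ, 0 < t → ‖g‖ ^ 2 ≤ t * K := by
      intro t ht
      have e1 : ‖a - (m + t • g)‖ ≤ ‖a - m‖ - t * (⟪a - m, g⟫ / ‖a - m‖)
          + t ^ 2 * (‖g‖ ^ 2 / ‖a - m‖) := by
        rw [sub_add_eq_sub_sub]
        have := norm_perturb (a - m) g ht.le (sub_ne_zero.mpr ha)
        calc ‖a - m - t • g‖ ≤ ‖a - m‖ - t * ⟪a - m, g⟫ / ‖a - m‖
              + t ^ 2 * ‖g‖ ^ 2 / ‖a - m‖ := this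
          _ = ‖a - m‖ - t * (⟪a - m, g⟫ / ‖a - m‖) + t ^ 2 * (‖g‖ ^ 2 / ‖a - m‖) := by ring
      have e2 : ‖b - (m + t • g)‖ ≤ ‖b - m‖ - t * (⟪b - m, g⟫ / ‖b - m‖)
          + t ^ 2 * (‖g‖ ^ 2 / ‖b - m‖) := by
        rw [sub_add_eq_sub_sub]
        have := norm_perturb (b - m) g ht.le (sub_ne_zero.mpr hb)
        calc ‖b - m - t • g‖ ≤ ‖b - m‖ - t * ⟪b - m, g⟫ / ‖b - m‖
              + t ^ 2 * ‖g‖ ^ 2 / ‖b - m‖ := this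
          _ = ‖b - m‖ - t * (⟪b - m, g⟫ / ‖b - m‖) + t ^ 2 * (‖g‖ ^ 2 / ‖b - m‖) := by ring
      have e3 : ‖c - (m + t • g)‖ ≤ ‖c - m‖ - t * (⟪c - m, g⟫ / ‖c - m‖)
          + t ^ 2 * (‖g‖ ^ 2 / ‖c - m‖) := by
        rw [sub_add_eq_sub_sub]
        have := norm_perturb (c - m) g ht.le (sub_ne_zero.mpr hc)
        calc ‖c - m - t • g‖ ≤ ‖c - m‖ - t * ⟪c - m, g⟫ / ‖c - m‖
              + t ^ 2 * ‖g‖ ^ 2 / ‖c - m‖ := this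
          _ = ‖c - m‖ - t * (⟪c - m, g⟫ / ‖c - m‖) + t ^ 2 * (‖g‖ ^ 2 / ‖c - m‖) := by ring
      have hinner : ⟪a - m, g⟫ / ‖a - m‖ + ⟪b - m, g⟫ / ‖b - m‖ + ⟪c - m, g⟫ / ‖c - m‖
          = ‖g‖ ^ 2 := by
        rw [inner_div_norm (sub_ne_zero.mpr ha), inner_div_norm (sub_ne_zero.mpr hb),
          inner_div_norm (sub_ne_zero.mpr hc), ← hu1, ← hu2, ← hu3,
          ← inner_add_left, ← inner_add_left, ← hgdef, real_inner_self_eq_norm_sq]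
      have hmin' := hmin (m + t • g)
      have hlin : t * (⟪a - m, g⟫ / ‖a - m‖) + t * (⟪b - m, g⟫ / ‖b - m‖)
          + t * (⟪c - m, g⟫ / ‖c - m‖)
          ≤ t ^ 2 * (‖g‖ ^ 2 / ‖a - m‖) + t ^ 2 * (‖g‖ ^ 2 / ‖b - m‖)
            + t ^ 2 * (‖g‖ ^ 2 / ‖c - m‖) := by linarith
      have ht2 : t * ‖g‖ ^ 2 ≤ t * (t * K) := by
        have hleft : t * ‖g‖ ^ 2 = t * (⟪a - m, g⟫ / ‖a - m‖) + t * (⟪b - m, g⟫ / ‖b - m‖)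
            + t * (⟪c - m, g⟫ / ‖c - m‖) := by rw [← hinner]; ring
        have hright : t * (t * K) = t ^ 2 * (‖g‖ ^ 2 / ‖a - m‖) + t ^ 2 * (‖g‖ ^ 2 / ‖b - m‖)
            + t ^ 2 * (‖g‖ ^ 2 / ‖c - m‖) := by rw [hK]; ring
        rw [hleft, hright]
        exact hlin
      exact le_of_mul_le_mul_left ht2 ht
    have hfin := le_of_forall_pos_le hKpos hstep
    nlinarith [hgn]
  -- Now use g = 0.
  have hn1 : ‖u1‖ = 1 := norm_inv_smul_eq_one (sub_ne_zero.mpr ha)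
  have hn2 : ‖u2‖ = 1 := norm_inv_smul_eq_one (sub_ne_zero.mpr hb)
  have hn3 : ‖u3‖ = 1 := norm_inv_smul_eq_one (sub_ne_zero.mpr hc)
  have hsum : u1 + u2 + u3 = 0 := by rw [← hgdef]; exact hg
  have h12 : ⟪u1, u2⟫ = -(1 / 2) := pair_inner_neg_half hsum hn1 hn2 hn3
  have h13 : ⟪u1, u3⟫ = -(1 / 2) :=
    pair_inner_neg_half (by rw [show u1 + u3 + u2 = u1 + u2 + u3 by abel]; exact hsum) hn1 hn3 hn2
  have h23 : ⟪u2, u3⟫ = -(1 / 2) :=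
    pair_inner_neg_half (by rw [show u2 + u3 + u1 = u1 + u2 + u3 by abel]; exact hsum) hn2 hn3 hn1
  have hd12 : ‖u1 - u2‖ = Real.sqrt 3 := norm_sub_unit_sqrt3 hn1 hn2 h12
  have hd13 : ‖u1 - u3‖ = Real.sqrt 3 := norm_sub_unit_sqrt3 hn1 hn3 h13
  have hd23 : ‖u2 - u3‖ = Real.sqrt 3 := norm_sub_unit_sqrt3 hn2 hn3 h23
  -- diagonal inner products
  have s11 : ⟪a - m, u1⟫ = ‖a - m‖ := inner_self_unit (sub_ne_zero.mpr ha)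
  have s22 : ⟪b - m, u2⟫ = ‖b - m‖ := inner_self_unit (sub_ne_zero.mpr hb)
  have s33 : ⟪c - m, u3⟫ = ‖c - m‖ := inner_self_unit (sub_ne_zero.mpr hc)
  -- row sums vanish
  have row : ∀ v : E, ⟪v, u1⟫ + ⟪v, u2⟫ + ⟪v, u3⟫ = 0 := by
    intro v
    rw [← inner_add_right, ← inner_add_right, ← hgdef, hg, inner_zero_right]
  have row1 := row (a - m)
  have row2 := row (b - m)
  have row3 := row (c - m)
  -- pairwise Cauchy-Schwarz bounds
  have cs12 : ⟪a - b, u1 - u2⟫ ≤ ‖a - b‖ * Real.sqrt 3 := by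
    calc ⟪a - b, u1 - u2⟫ ≤ ‖a - b‖ * ‖u1 - u2‖ := real_inner_le_norm _ _
      _ = ‖a - b‖ * Real.sqrt 3 := by rw [hd12]
  have cs13 : ⟪a - c, u1 - u3⟫ ≤ ‖a - c‖ * Real.sqrt 3 := by
    calc ⟪a - c, u1 - u3⟫ ≤ ‖a - c‖ * ‖u1 - u3‖ := real_inner_le_norm _ _
      _ = ‖a - c‖ * Real.sqrt 3 := by rw [hd13]
  have cs23 : ⟪b - c, u2 - u3⟫ ≤ ‖b - c‖ * Real.sqrt 3 := by
    calc ⟪b - c, u2 - u3⟫ ≤ ‖b - c‖ * ‖u2 - u3‖ := real_inner_le_norm _ _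
      _ = ‖b - c‖ * Real.sqrt 3 := by rw [hd23]
  -- expansions
  have ex12 : ⟪a - b, u1 - u2⟫
      = ⟪a - m, u1⟫ - ⟪a - m, u2⟫ - ⟪b - m, u1⟫ + ⟪b - m, u2⟫ := by
    rw [show a - b = (a - m) - (b - m) by abel, inner_sub_left, inner_sub_right, inner_sub_right]
    ring
  have ex13 : ⟪a - c, u1 - u3⟫
      = ⟪a - m, u1⟫ - ⟪a - m, u3⟫ - ⟪c - m, u1⟫ + ⟪c - m, u3⟫ := by
    rw [show a - c = (a - m) - (c - m) by abel, inner_sub_left, inner_sub_right, inner_sub_right]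
    ring
  have ex23 : ⟪b - c, u2 - u3⟫
      = ⟪b - m, u2⟫ - ⟪b - m, u3⟫ - ⟪c - m, u2⟫ + ⟪c - m, u3⟫ := by
    rw [show b - c = (b - m) - (c - m) by abel, inner_sub_left, inner_sub_right, inner_sub_right]
    ring
  have hfin : 3 * (‖a - m‖ + ‖b - m‖ + ‖c - m‖)
      ≤ (‖a - b‖ + ‖a - c‖ + ‖b - c‖) * Real.sqrt 3 := by
    have t12 := ex12 ▸ cs12
    have t13 := ex13 ▸ cs13
    have t23 := ex23 ▸ cs23
    linarith
  have h5 := mul_le_mul_of_nonneg_left hfin sqrt3_pos.le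
  have h6 : Real.sqrt 3 * ((‖a - b‖ + ‖a - c‖ + ‖b - c‖) * Real.sqrt 3)
      = 3 * (‖a - b‖ + ‖a - c‖ + ‖b - c‖) := by
    rw [show Real.sqrt 3 * ((‖a - b‖ + ‖a - c‖ + ‖b - c‖) * Real.sqrt 3)
        = (Real.sqrt 3 * Real.sqrt 3) * (‖a - b‖ + ‖a - c‖ + ‖b - c‖) from by ring,
      Real.mul_self_sqrt (by norm_num : (0:ℝ) ≤ 3)]
  rw [h6] at h5
  linarith

/-- Vertex case: the minimizer is the vertex `a`. -/
lemma vertex_case (a b c : E) (hb : b ≠ a) (hc : c ≠ a)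
    (hmin : ∀ x : E, ‖b - a‖ + ‖c - a‖ ≤ ‖a - x‖ + ‖b - x‖ + ‖c - x‖) :
    Real.sqrt 3 * (‖b - a‖ + ‖c - a‖) ≤ ‖a - b‖ + ‖a - c‖ + ‖b - c‖ := by
  have hA2 : 0 < ‖b - a‖ := norm_pos_iff.mpr (sub_ne_zero.mpr hb)
  have hA3 : 0 < ‖c - a‖ := norm_pos_iff.mpr (sub_ne_zero.mpr hc)
  set u2 : E := ‖b - a‖⁻¹ • (b - a) with hu2
  set u3 : E := ‖c - a‖⁻¹ • (c - a) with hu3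
  set g : E := u2 + u3 with hgdef
  have hn2 : ‖u2‖ = 1 := norm_inv_smul_eq_one (sub_ne_zero.mpr hb)
  have hn3 : ‖u3‖ = 1 := norm_inv_smul_eq_one (sub_ne_zero.mpr hc)
  -- establish ‖g‖ ≤ 1
  have hgle : ‖g‖ ≤ 1 := by
    by_contra hg1
    push_neg at hg1
    have hgn : 0 < ‖g‖ := lt_trans one_pos hg1
    set K : ℝ := ‖g‖ ^ 2 / ‖b - a‖ + ‖g‖ ^ 2 / ‖c - a‖ with hK
    have hKpos : 0 < K := by positivity
    have hstep : ∀ t : ℝ, 0 < t → ‖g‖ ^ 2 - ‖g‖ ≤ t * K := by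
      intro t ht
      have e2 : ‖b - (a + t • g)‖ ≤ ‖b - a‖ - t * (⟪b - a, g⟫ / ‖b - a‖)
          + t ^ 2 * (‖g‖ ^ 2 / ‖b - a‖) := by
        rw [sub_add_eq_sub_sub]
        have := norm_perturb (b - a) g ht.le (sub_ne_zero.mpr hb)
        calc ‖b - a - t • g‖ ≤ ‖b - a‖ - t * ⟪b - a, g⟫ / ‖b - a‖
              + t ^ 2 * ‖g‖ ^ 2 / ‖b - a‖ := this
          _ = ‖b - a‖ - t * (⟪b - a, g⟫ / ‖b - a‖) + t ^ 2 * (‖g‖ ^ 2 / ‖b - a‖) := by ring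
      have e3 : ‖c - (a + t • g)‖ ≤ ‖c - a‖ - t * (⟪c - a, g⟫ / ‖c - a‖)
          + t ^ 2 * (‖g‖ ^ 2 / ‖c - a‖) := by
        rw [sub_add_eq_sub_sub]
        have := norm_perturb (c - a) g ht.le (sub_ne_zero.mpr hc)
        calc ‖c - a - t • g‖ ≤ ‖c - a‖ - t * ⟪c - a, g⟫ / ‖c - a‖
              + t ^ 2 * ‖g‖ ^ 2 / ‖c - a‖ := this
          _ = ‖c - a‖ - t * (⟪c - a, g⟫ / ‖c - a‖) + t ^ 2 * (‖g‖ ^ 2 / ‖c - a‖) := by ring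
      have e1 : ‖a - (a + t • g)‖ = t * ‖g‖ := by
        rw [sub_add_eq_sub_sub, sub_self, zero_sub, norm_neg, norm_smul, Real.norm_eq_abs,
          abs_of_pos ht]
      have hinner : ⟪b - a, g⟫ / ‖b - a‖ + ⟪c - a, g⟫ / ‖c - a‖ = ‖g‖ ^ 2 := by
        rw [inner_div_norm (sub_ne_zero.mpr hb), inner_div_norm (sub_ne_zero.mpr hc),
          ← hu2, ← hu3, ← inner_add_left, ← hgdef, real_inner_self_eq_norm_sq]
      have hmin' := hmin (a + t • g)
      have hlin : t * (⟪b - a, g⟫ / ‖b - a‖) + t * (⟪c - a, g⟫ / ‖c - a‖)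
          ≤ t * ‖g‖ + t ^ 2 * (‖g‖ ^ 2 / ‖b - a‖) + t ^ 2 * (‖g‖ ^ 2 / ‖c - a‖) := by
        rw [e1] at hmin'
        linarith
      have ht2 : t * (‖g‖ ^ 2 - ‖g‖) ≤ t * (t * K) := by
        have hleft : t * (‖g‖ ^ 2 - ‖g‖)
            = t * (⟪b - a, g⟫ / ‖b - a‖) + t * (⟪c - a, g⟫ / ‖c - a‖) - t * ‖g‖ := by
          rw [← hinner]; ring
        have hright : t * (t * K) = t ^ 2 * (‖g‖ ^ 2 / ‖b - a‖)
            + t ^ 2 * (‖g‖ ^ 2 / ‖c - a‖) := by rw [hK]; ring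
        rw [hleft, hright]
        linarith
      exact le_of_mul_le_mul_left ht2 ht
    have hfin := le_of_forall_pos_le hKpos hstep
    nlinarith [hgn]
  -- now ⟪u2, u3⟫ ≤ -1/2
  have hg2 : ‖g‖ ^ 2 ≤ 1 := by nlinarith [norm_nonneg g]
  have hgexp : ‖g‖ ^ 2 = 2 + 2 * ⟪u2, u3⟫ := by
    rw [hgdef, norm_add_sq_real, hn2, hn3]; ring
  have hu23 : ⟪u2, u3⟫ ≤ -(1 / 2) := by linarith [hg2, hgexp.symm.le, hgexp.le]
  -- translate to inner of differences
  have hioi : ⟪b - a, c - a⟫ = ‖b - a‖ * ‖c - a‖ * ⟪u2, u3⟫ := by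
    rw [hu2, hu3, real_inner_smul_left, real_inner_smul_right]
    field_simp
    all_goals ring
  have hz : ‖b - c‖ ^ 2 = ‖b - a‖ ^ 2 - 2 * ⟪b - a, c - a⟫ + ‖c - a‖ ^ 2 := by
    rw [show b - c = (b - a) - (c - a) by abel, norm_sub_sq_real]
  have hzbound : ‖b - c‖ ^ 2 ≥ ‖b - a‖ ^ 2 + ‖c - a‖ ^ 2 + ‖b - a‖ * ‖c - a‖ := by
    have : ⟪b - a, c - a⟫ ≤ -(‖b - a‖ * ‖c - a‖ / 2) := by
      rw [hioi]
      nlinarith [mul_pos hA2 hA3]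
    nlinarith [this]
  -- final algebra
  have h2z : Real.sqrt 3 * (‖b - a‖ + ‖c - a‖) ≤ 2 * ‖b - c‖ := by
    apply le_of_sq_le_sq' (by positivity) (by positivity)
    have h1 : (Real.sqrt 3 * (‖b - a‖ + ‖c - a‖)) ^ 2
        = 3 * (‖b - a‖ + ‖c - a‖) ^ 2 := by
      rw [mul_pow, sqrt3_sq]
    rw [h1]
    nlinarith [sq_nonneg (‖b - a‖ - ‖c - a‖), hzbound]
  have hab : ‖a - b‖ = ‖b - a‖ := norm_sub_rev a b
  have hac : ‖a - c‖ = ‖c - a‖ := norm_sub_rev a c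
  rw [hab, hac]
  nlinarith [h2z, sqrt3_le_two, mul_nonneg (sub_nonneg.mpr sqrt3_le_two)
    (by positivity : (0:ℝ) ≤ ‖b - a‖ + ‖c - a‖), norm_nonneg (b - c)]




/-- Fermat-point upper bound: some point has distance-sum at most perimeter / √3. -/
lemma fermat_ub [ProperSpace E] (a b c : E) (hab : a ≠ b) (hac : a ≠ c) (hbc : b ≠ c) :
    ∃ m : E, Real.sqrt 3 * (‖a - m‖ + ‖b - m‖ + ‖c - m‖)
      ≤ ‖a - b‖ + ‖a - c‖ + ‖b - c‖ := by
  obtain ⟨m, hmin⟩ := exists_min a b c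
  refine ⟨m, ?_⟩
  by_cases hA : a = m
  · subst hA
    have hmin' : ∀ x : E, ‖b - a‖ + ‖c - a‖ ≤ ‖a - x‖ + ‖b - x‖ + ‖c - x‖ := by
      intro x
      have := hmin x
      have h0 : ‖a - a‖ = 0 := by simp
      rw [h0] at this
      linarith
    have := vertex_case a b c (Ne.symm hab) (Ne.symm hac) hmin'
    have h0 : ‖a - a‖ = 0 := by simp
    rw [h0]
    have hba : ‖b - a‖ = ‖a - b‖ := norm_sub_rev b a
    have hca : ‖c - a‖ = ‖a - c‖ := norm_sub_rev c a
    rw [hba, hca] at this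
    rw [hba, hca, zero_add]
    linarith
  by_cases hB : b = m
  · subst hB
    have hmin' : ∀ x : E, ‖a - b‖ + ‖c - b‖ ≤ ‖b - x‖ + ‖a - x‖ + ‖c - x‖ := by
      intro x
      have := hmin x
      have h0 : ‖b - b‖ = 0 := by simp
      rw [h0] at this
      linarith
    have := vertex_case b a c hab (Ne.symm hbc) hmin'
    have h0 : ‖b - b‖ = 0 := by simp
    rw [h0]
    have h1 : ‖b - a‖ = ‖a - b‖ := norm_sub_rev b a
    have h2 : ‖b - c‖ = ‖c - b‖ := norm_sub_rev b c
    rw [h1, h2] at this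
    rw [add_zero, h2]
    linarith
  by_cases hC : c = m
  · subst hC
    have hmin' : ∀ x : E, ‖a - c‖ + ‖b - c‖ ≤ ‖c - x‖ + ‖a - x‖ + ‖b - x‖ := by
      intro x
      have := hmin x
      have h0 : ‖c - c‖ = 0 := by simp
      rw [h0] at this
      linarith
    have := vertex_case c a b hac hbc hmin'
    have h0 : ‖c - c‖ = 0 := by simp
    rw [h0]
    have h1 : ‖c - a‖ = ‖a - c‖ := norm_sub_rev c a
    have h2 : ‖c - b‖ = ‖b - c‖ := norm_sub_rev c b
    rw [h1, h2] at this
    rw [add_zero]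
    linarith
  · exact interior_case a b c m (fun h => hA h) (fun h => hB h) (fun h => hC h) hmin

/-- Distance from a vertex of an equilateral triangle to the centroid. -/
lemma centroid_norm {r : ℝ} (hr : 0 < r) (a b c : E)
    (hab : ‖a - b‖ = r) (hac : ‖a - c‖ = r) (hbc : ‖b - c‖ = r) :
    ‖a - (3 : ℝ)⁻¹ • (a + b + c)‖ = Real.sqrt 3 * r / 3 := by
  have h1 : a - (3 : ℝ)⁻¹ • (a + b + c) = (3 : ℝ)⁻¹ • ((a - b) + (a - c)) := by
    module
  have hinner : ⟪a - b, a - c⟫ = r ^ 2 / 2 := by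
    have h2 : ‖(a - b) - (a - c)‖ ^ 2 = ‖a - b‖ ^ 2 - 2 * ⟪a - b, a - c⟫ + ‖a - c‖ ^ 2 :=
      norm_sub_sq_real _ _
    have h3 : (a - b) - (a - c) = c - b := by abel
    have h4 : ‖c - b‖ = r := by rw [norm_sub_rev]; exact hbc
    rw [h3, h4, hab, hac] at h2
    linarith
  have h5 : ‖a - (3 : ℝ)⁻¹ • (a + b + c)‖ ^ 2 = r ^ 2 / 3 := by
    rw [h1, norm_smul, mul_pow, norm_add_sq_real, hab, hac, hinner]
    rw [norm_inv, Real.norm_ofNat]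
    norm_num
    ring
  have h6 : (Real.sqrt 3 * r / 3) ^ 2 = r ^ 2 / 3 := by
    rw [div_pow, mul_pow, sqrt3_sq]
    ring
  exact eq_of_sq_eq_sq (norm_nonneg _) (by positivity) (by rw [h5, h6])

/-- Lower bound for the sum of distances from any point to an equilateral triangle. -/
lemma equilateral_lb {r : ℝ} (hr : 0 < r) (a b c : E)
    (hab : ‖a - b‖ = r) (hac : ‖a - c‖ = r) (hbc : ‖b - c‖ = r) (m : E) :
    Real.sqrt 3 * r ≤ ‖a - m‖ + ‖b - m‖ + ‖c - m‖ := by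
  set o : E := (3 : ℝ)⁻¹ • (a + b + c) with ho
  have hna : ‖a - o‖ = Real.sqrt 3 * r / 3 := centroid_norm hr a b c hab hac hbc
  have hnb : ‖b - o‖ = Real.sqrt 3 * r / 3 := by
    have := centroid_norm hr b a c (by rw [norm_sub_rev]; exact hab) hbc hac
    rw [show b + a + c = a + b + c from by abel] at this
    exact this
  have hnc : ‖c - o‖ = Real.sqrt 3 * r / 3 := by
    have := centroid_norm hr c a b (by rw [norm_sub_rev]; exact hac)
      (by rw [norm_sub_rev]; exact hbc) hab
    rw [show c + a + b = a + b + c from by abel] at this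
    exact this
  have hvpos : 0 < Real.sqrt 3 * r / 3 := by positivity
  have haon : a - o ≠ 0 := fun h => by rw [h, norm_zero] at hna; linarith
  have hbon : b - o ≠ 0 := fun h => by rw [h, norm_zero] at hnb; linarith
  have hcon : c - o ≠ 0 := fun h => by rw [h, norm_zero] at hnc; linarith
  set s : ℝ := Real.sqrt 3 * r / 3 with hs
  set u1 : E := s⁻¹ • (a - o) with hu1
  set u2 : E := s⁻¹ • (b - o) with hu2
  set u3 : E := s⁻¹ • (c - o) with hu3
  have hn1 : ‖u1‖ = 1 := by
    rw [hu1, norm_smul, Real.norm_eq_abs, abs_of_pos (inv_pos.mpr hvpos), hna]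
    exact inv_mul_cancel₀ hvpos.ne'
  have hn2 : ‖u2‖ = 1 := by
    rw [hu2, norm_smul, Real.norm_eq_abs, abs_of_pos (inv_pos.mpr hvpos), hnb]
    exact inv_mul_cancel₀ hvpos.ne'
  have hn3 : ‖u3‖ = 1 := by
    rw [hu3, norm_smul, Real.norm_eq_abs, abs_of_pos (inv_pos.mpr hvpos), hnc]
    exact inv_mul_cancel₀ hvpos.ne'
  have husum : u1 + u2 + u3 = 0 := by
    rw [hu1, hu2, hu3, ← smul_add, ← smul_add]
    have h0 : (a - o) + (b - o) + (c - o) = 0 := by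
      rw [ho]; module
    rw [h0, smul_zero]
  -- lower bounds via Cauchy–Schwarz
  have hb1 : ⟪a - m, u1⟫ ≤ ‖a - m‖ := by
    calc ⟪a - m, u1⟫ ≤ ‖a - m‖ * ‖u1‖ := real_inner_le_norm _ _
      _ = ‖a - m‖ := by rw [hn1, mul_one]
  have hb2 : ⟪b - m, u2⟫ ≤ ‖b - m‖ := by
    calc ⟪b - m, u2⟫ ≤ ‖b - m‖ * ‖u2‖ := real_inner_le_norm _ _
      _ = ‖b - m‖ := by rw [hn2, mul_one]
  have hb3 : ⟪c - m, u3⟫ ≤ ‖c - m‖ := by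
    calc ⟪c - m, u3⟫ ≤ ‖c - m‖ * ‖u3‖ := real_inner_le_norm _ _
      _ = ‖c - m‖ := by rw [hn3, mul_one]
  -- decompose
  have dec1 : ⟪a - m, u1⟫ = ⟪a - o, u1⟫ + ⟪o - m, u1⟫ := by
    rw [show a - m = (a - o) + (o - m) from by abel, inner_add_left]
  have dec2 : ⟪b - m, u2⟫ = ⟪b - o, u2⟫ + ⟪o - m, u2⟫ := by
    rw [show b - m = (b - o) + (o - m) from by abel, inner_add_left]
  have dec3 : ⟪c - m, u3⟫ = ⟪c - o, u3⟫ + ⟪o - m, u3⟫ := by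
    rw [show c - m = (c - o) + (o - m) from by abel, inner_add_left]
  have hzero : ⟪o - m, u1⟫ + ⟪o - m, u2⟫ + ⟪o - m, u3⟫ = 0 := by
    rw [← inner_add_right, ← inner_add_right, husum, inner_zero_right]
  have hdiag : ∀ v : E, ‖v‖ = s → ⟪v, s⁻¹ • v⟫ = s := by
    intro v hv
    rw [real_inner_smul_right, real_inner_self_eq_norm_sq, hv]
    field_simp
    all_goals ring
  have hd1 : ⟪a - o, u1⟫ = s := hdiag (a - o) (by rw [hna])
  have hd2 : ⟪b - o, u2⟫ = s := hdiag (b - o) (by rw [hnb])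
  have hd3 : ⟪c - o, u3⟫ = s := hdiag (c - o) (by rw [hnc])
  have h3s : 3 * s = Real.sqrt 3 * r := by rw [hs]; ring
  linarith [hb1, hb2, hb3]

-- ====================== PART D ======================
section PartD
variable {V : Type*} [DecidableEq V] {G : SimpleGraph V}

lemma walk_dist_le {X : Type*} [PseudoMetricSpace X] {V : Type*} {G : SimpleGraph V}
    (φ : V → X) (w : Sym2 V → ℝ) (hw : ∀ x y : V, w s(x, y) = dist (φ x) (φ y))
    {u v : V} (p : G.Walk u v) : dist (φ u) (φ v) ≤ (p.edges.map w).sum := by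
  induction p with
  | nil => simp
  | @cons u b v h q ih =>
    rw [Walk.edges_cons, List.map_cons, List.sum_cons, hw u b]
    calc dist (φ u) (φ v) ≤ dist (φ u) (φ b) + dist (φ b) (φ v) := dist_triangle _ _ _
      _ ≤ dist (φ u) (φ b) + (q.edges.map w).sum := by linarith
    
lemma le_tdist_of_ne {B : ℝ} (hB : 0 ≤ B) (hG : G.IsTree) {u v : V} (h : u ≠ v) :
    B ≤ tdist hG (fun _ => B) u v := by
  rw [tdist]
  have hlen : 1 ≤ (tpath hG u v).edges.length := by
    by_contra h0
    push_neg at h0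
    have h1 : (tpath hG u v).edges.length = 0 := by omega
    rw [Walk.length_edges] at h1
    exact h ((tpath hG u v).eq_of_length_eq_zero h1)
  have : ((tpath hG u v).edges.map (fun _ => B)).sum = ((tpath hG u v).edges.length : ℝ) * B := by
    induction (tpath hG u v).edges with
    | nil => simp
    | cons a t ih => simp [ih]; ring
  rw [this]
  nlinarith [hlen, hB, (by exact_mod_cast hlen : (1:ℝ) ≤ ((tpath hG u v).edges.length : ℝ))]

lemma frame_dist_eq {M : Type} (F : Frame M) (w : Sym2 F.V → ℝ) (u v : F.V) :
    F.dist w u v = tdist F.tree w u v := rfl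

section FrameM
variable {M : Type} [Fintype M] [DecidableEq M] [Nonempty M]

noncomputable def frameSelf (m₀ : M) : Frame M where
  V := M
  G := starG m₀
  tree := starG_isTree m₀
  ι := id
  inj := fun a b h => h
  joins := fun v _ => ⟨v, rfl⟩

lemma weight_nonneg {F : Frame M} {w : Sym2 F.V → ℝ} (hw : ∀ e ∈ F.G.edgeFinset, 0 ≤ w e) :
    0 ≤ F.weight w := Finset.sum_nonneg hw

lemma mf_set_nonempty (ρ : M → M → ℝ) (hnn : ∀ p q, 0 ≤ ρ p q) (hrefl : ∀ p, ρ p p = 0) :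
    { x | ∃ F : Frame M, ∃ w : Sym2 F.V → ℝ, F.IsFilling w ρ ∧ F.weight w = x }.Nonempty := by
  classical
  set B : ℝ := ∑ p : M, ∑ q : M, ρ p q with hBdef
  have hB0 : 0 ≤ B := Finset.sum_nonneg fun p _ => Finset.sum_nonneg fun q _ => hnn p q
  have hBge : ∀ p q : M, ρ p q ≤ B := by
    intro p q
    calc ρ p q ≤ ∑ q' : M, ρ p q' :=
          Finset.single_le_sum (fun q' _ => hnn p q') (Finset.mem_univ q)
      _ ≤ B := Finset.single_le_sum (f := fun p' => ∑ q' : M, ρ p' q')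
          (fun p' _ => Finset.sum_nonneg fun q' _ => hnn p' q') (Finset.mem_univ p)
  obtain ⟨m₀⟩ := ‹Nonempty M›
  refine ⟨(frameSelf m₀).weight (fun _ => B), ⟨frameSelf m₀, fun _ => B, ⟨fun e _ => hB0, ?_⟩, rfl⟩⟩
  intro p q
  rw [frame_dist_eq]
  by_cases h : p = q
  · subst h
    rw [tdist_self]
    rw [hrefl]
  · calc ρ p q ≤ B := hBge p q
      _ ≤ tdist (frameSelf m₀).tree (fun _ => B) p q := le_tdist_of_ne hB0 _ h

lemma le_mf {ρ : M → M → ℝ} (hnn : ∀ p q, 0 ≤ ρ p q) (hrefl : ∀ p, ρ p p = 0) {L : ℝ}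
    (h : ∀ (F : Frame M) (w : Sym2 F.V → ℝ), F.IsFilling w ρ → L ≤ F.weight w) :
    L ≤ mf ρ := by
  apply le_csInf (mf_set_nonempty ρ hnn hrefl)
  rintro x ⟨F, w, hfill, rfl⟩
  exact h F w hfill

lemma mf_pair_lb {ρ : M → M → ℝ} (hnn : ∀ p q, 0 ≤ ρ p q) (hrefl : ∀ p, ρ p p = 0)
    (p q : M) : ρ p q ≤ mf ρ := by
  refine le_mf hnn hrefl ?_
  rintro F w ⟨hw, hd⟩
  have hw' : ∀ e ∈ F.G.edgeSet, 0 ≤ w e := fun e he => hw e (mem_edgeFinset.mpr he)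
  calc ρ p q ≤ F.dist w (F.ι p) (F.ι q) := hd p q
    _ ≤ F.weight w := by
        rw [frame_dist_eq]
        exact tdist_le_total F.tree hw' _ _

lemma mf_three_lb {ρ : M → M → ℝ} (hnn : ∀ p q, 0 ≤ ρ p q) (hrefl : ∀ p, ρ p p = 0)
    (p q r : M) : (ρ p q + ρ q r + ρ p r) / 2 ≤ mf ρ := by
  refine le_mf hnn hrefl ?_
  rintro F w ⟨hw, hd⟩
  have hw' : ∀ e ∈ F.G.edgeSet, 0 ≤ w e := fun e he => hw e (mem_edgeFinset.mpr he)
  obtain ⟨m, hm⟩ := median F.tree hw' (F.ι p) (F.ι q) (F.ι r)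
  have h1 : ρ p q ≤ tdist F.tree w (F.ι p) m + tdist F.tree w (F.ι q) m := by
    calc ρ p q ≤ F.dist w (F.ι p) (F.ι q) := hd p q
      _ ≤ tdist F.tree w (F.ι p) m + tdist F.tree w m (F.ι q) := by
          rw [frame_dist_eq]; exact tdist_triangle F.tree hw' _ _ _
      _ = tdist F.tree w (F.ι p) m + tdist F.tree w (F.ι q) m := by
          rw [tdist_comm F.tree w m (F.ι q)]
  have h2 : ρ q r ≤ tdist F.tree w (F.ι q) m + tdist F.tree w (F.ι r) m := by
    calc ρ q r ≤ F.dist w (F.ι q) (F.ι r) := hd q r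
      _ ≤ tdist F.tree w (F.ι q) m + tdist F.tree w m (F.ι r) := by
          rw [frame_dist_eq]; exact tdist_triangle F.tree hw' _ _ _
      _ = tdist F.tree w (F.ι q) m + tdist F.tree w (F.ι r) m := by
          rw [tdist_comm F.tree w m (F.ι r)]
  have h3 : ρ p r ≤ tdist F.tree w (F.ι p) m + tdist F.tree w (F.ι r) m := by
    calc ρ p r ≤ F.dist w (F.ι p) (F.ι r) := hd p r
      _ ≤ tdist F.tree w (F.ι p) m + tdist F.tree w m (F.ι r) := by
          rw [frame_dist_eq]; exact tdist_triangle F.tree hw' _ _ _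
      _ = tdist F.tree w (F.ι p) m + tdist F.tree w (F.ι r) m := by
          rw [tdist_comm F.tree w m (F.ι r)]
  have hWdef : F.weight w = ∑ e ∈ F.G.edgeFinset, w e := rfl
  rw [hWdef]
  linarith

noncomputable def frameOption (hcard : Fintype.card M = 3) : Frame M where
  V := Option M
  G := starG (none : Option M)
  tree := starG_isTree none
  ι := some
  inj := Option.some_injective M
  joins := by
    intro v hdeg
    match v with
    | some x => exact ⟨x, rfl⟩
    | none =>
      exfalso
      rw [starG_degree_center, Fintype.card_option, hcard] at hdeg
      omega

lemma mf_le_of_card_three {ρ : M → M → ℝ} (hcard : Fintype.card M = 3) {r : ℝ} (hr : 0 ≤ r)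
    (hrefl : ∀ p, ρ p p = 0) (hle : ∀ p q : M, p ≠ q → ρ p q ≤ r) :
    mf ρ ≤ 3 * (r / 2) := by
  classical
  have hbdd : BddBelow { x | ∃ F : Frame M, ∃ w : Sym2 F.V → ℝ, F.IsFilling w ρ ∧ F.weight w = x } := by
    refine ⟨0, ?_⟩
    rintro x ⟨F, w, hfill, rfl⟩
    exact weight_nonneg hfill.1
  set F := frameOption hcard with hF
  set w : Sym2 F.V → ℝ := fun _ => r / 2 with hwdef
  have hfill : F.IsFilling w ρ := by
    constructor
    · intro e _
      positivity
    · intro p q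
      by_cases h : p = q
      · subst h
        rw [frame_dist_eq, tdist_self, hrefl]
      · have adj1 : (starG (none : Option M)).Adj (some p) none := by
          refine ⟨by simp, Or.inr rfl⟩
        have adj2 : (starG (none : Option M)).Adj none (some q) := by
          refine ⟨by simp, Or.inl rfl⟩
        have hpw : (Walk.cons adj1 (Walk.cons adj2 Walk.nil)).IsPath := by
          rw [Walk.isPath_def]
          simp [Walk.support_cons, Walk.support_nil]
          exact fun hh => h hh
        have hdist : F.dist w (F.ι p) (F.ι q) = r := by
          rw [frame_dist_eq, tdist]
          change (List.map w (tpath F.tree (some p) (some q)).edges).sum = r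
          rw [tpath_unique F.tree _ hpw]
          simp only [Walk.edges_cons, Walk.edges_nil, List.map_cons, List.map_nil,
            List.sum_cons, List.sum_nil, hwdef]
          simp [Walk.edges, Walk.darts]
        rw [hdist]
        exact hle p q h
  have hweight : F.weight w = 3 * (r / 2) := by
    have h1 : F.weight w = ∑ e ∈ (starG (none : Option M)).edgeFinset, w e := rfl
    rw [h1, starG_sum]
    rw [Finset.sum_const, Finset.card_erase_of_mem (Finset.mem_univ _), Finset.card_univ,
      Fintype.card_option, hcard]
    simp
    all_goals ring
  calc mf ρ ≤ F.weight w := csInf_le hbdd ⟨F, w, hfill, rfl⟩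
    _ = 3 * (r / 2) := hweight

end FrameM

section SMTsec
variable {X : Type} [MetricSpace X]

noncomputable def wD (N : Finset X) : Sym2 (↥N) → ℝ :=
  Sym2.lift ⟨fun p q => dist (p : X) (q : X), fun a b => dist_comm _ _⟩

lemma wD_nonneg (N : Finset X) : ∀ e, 0 ≤ wD N e := by
  intro e
  induction e with
  | h x y => rw [wD, Sym2.lift_mk]; exact dist_nonneg

lemma wD_eq (N : Finset X) (x y : ↥N) : wD N s(x, y) = dist (x : X) (y : X) := by
  rw [wD, Sym2.lift_mk]

open Classical in
lemma mstW_tree_sum (N : Finset X) (H : SimpleGraph ↥N) [inst : DecidableRel H.Adj] :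
    (∑ u : ↥N, ∑ v : ↥N, if H.Adj u v then dist (u : X) (v : X) else 0) / 2
      = ∑ e ∈ H.edgeFinset, wD N e := by
  rw [double_sum_eq H (fun p q => dist (p : X) (q : X)) (fun u v => dist_comm _ _)]
  rw [show Sym2.lift ⟨fun (p q : ↥N) => dist (p : X) (q : X), fun a b => dist_comm _ _⟩ = wD N from rfl]
  ring

open Classical in
lemma mstW_nonneg (N : Finset X) :
    ∀ x ∈ { x | ∃ H : SimpleGraph ↥N, H.IsTree ∧
      x = (∑ u : ↥N, ∑ v : ↥N, if H.Adj u v then dist (u : X) (v : X) else 0) / 2 }, 0 ≤ x := by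
  rintro x ⟨H, _, rfl⟩
  have : 0 ≤ ∑ u : ↥N, ∑ v : ↥N, if H.Adj u v then dist (u : X) (v : X) else 0 := by
    refine Finset.sum_nonneg fun u _ => Finset.sum_nonneg fun v _ => ?_
    split
    · exact dist_nonneg
    · exact le_rfl
  linarith


open Classical in
lemma mstW_bddBelow (N : Finset X) :
    BddBelow { x | ∃ H : SimpleGraph ↥N, H.IsTree ∧
      x = (∑ u : ↥N, ∑ v : ↥N, if H.Adj u v then dist (u : X) (v : X) else 0) / 2 } :=
  ⟨0, fun x hx => mstW_nonneg N x hx⟩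

lemma mstW_nonneg' (N : Finset X) : 0 ≤ mstW (fun p q : ↥N => dist (p : X) (q : X)) := by
  apply Real.sInf_nonneg
  exact fun x hx => mstW_nonneg N x hx

open Classical in
lemma le_mstW (N : Finset X) [hne : Nonempty ↥N] {B : ℝ}
    (h : ∀ (H : SimpleGraph ↥N) (inst : DecidableRel H.Adj), H.IsTree →
      B ≤ ∑ e ∈ H.edgeFinset, wD N e) :
    B ≤ mstW (fun p q : ↥N => dist (p : X) (q : X)) := by
  rw [mstW]
  have hex : { x | ∃ H : SimpleGraph ↥N, H.IsTree ∧
      x = (∑ u : ↥N, ∑ v : ↥N, if H.Adj u v then dist (u : X) (v : X) else 0) / 2 }.Nonempty := by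
    refine ⟨(∑ u : ↥N, ∑ v : ↥N, if (starG (Classical.arbitrary ↥N)).Adj u v
        then dist (u : X) (v : X) else 0) / 2,
      ⟨starG (Classical.arbitrary ↥N), starG_isTree _, ?_⟩⟩
    congr!
  apply le_csInf hex
  rintro x ⟨H, hT, rfl⟩
  letI inst : DecidableRel H.Adj := fun u v => Classical.propDecidable _
  have h1 := h H inst hT
  have h2 := mstW_tree_sum N H (inst := inst)
  have h3 : (∑ u : ↥N, ∑ v : ↥N, if H.Adj u v then dist (u : X) (v : X) else 0) / 2
      = ∑ e ∈ H.edgeFinset, wD N e := h2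
  linarith [h3 ▸ h1]

open Classical in
lemma mstW_le_star (N : Finset X) (m : X) (hm : m ∈ N) :
    mstW (fun p q : ↥N => dist (p : X) (q : X)) ≤ ∑ y ∈ N.erase m, dist m y := by
  haveI : Nonempty ↥N := ⟨⟨m, hm⟩⟩
  set c₀ : ↥N := ⟨m, hm⟩ with hc₀
  have hmem : ((∑ u : ↥N, ∑ v : ↥N, if (starG c₀).Adj u v then dist (u : X) (v : X) else 0) / 2)
      ∈ { x | ∃ H : SimpleGraph ↥N, H.IsTree ∧
        x = (∑ u : ↥N, ∑ v : ↥N, if H.Adj u v then dist (u : X) (v : X) else 0) / 2 } := by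
    refine ⟨starG c₀, starG_isTree c₀, ?_⟩
    congr!
  have hle : mstW (fun p q : ↥N => dist (p : X) (q : X))
      ≤ (∑ u : ↥N, ∑ v : ↥N, if (starG c₀).Adj u v then dist (u : X) (v : X) else 0) / 2 := by
    rw [mstW]
    exact csInf_le (mstW_bddBelow N) hmem
  have heval : (∑ u : ↥N, ∑ v : ↥N, if (starG c₀).Adj u v then dist (u : X) (v : X) else 0) / 2
      = ∑ x ∈ univ.erase c₀, dist m (x : X) := by
    rw [mstW_tree_sum N (starG c₀), starG_sum]
    refine Finset.sum_congr rfl fun x _ => ?_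
    rw [wD_eq]
  have hre : ∑ x ∈ univ.erase c₀, dist m (x : X) = ∑ y ∈ N.erase m, dist m y := by
    have e1 := Finset.sum_erase_add univ (fun x : ↥N => dist m (x : X)) (Finset.mem_univ c₀)
    have e2 := Finset.sum_erase_add N (fun y => dist m y) hm
    have e3 : ∑ x : ↥N, dist m (x : X) = ∑ y ∈ N, dist m y :=
      Finset.sum_coe_sort N (fun y => dist m y)
    have e4 : dist m (c₀ : X) = 0 := by rw [hc₀]; simp
    rw [e4] at e1
    rw [e3] at e1
    linarith
  rw [heval, hre] at hle
  exact hle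

lemma dist_le_treeSum (N : Finset X) (H : SimpleGraph ↥N) [DecidableRel H.Adj]
    (hT : H.IsTree) (p q : ↥N) :
    dist (p : X) (q : X) ≤ ∑ e ∈ H.edgeFinset, wD N e := by
  classical
  have h1 := walk_dist_le (fun x : ↥N => (x : X)) (wD N) (fun x y => wD_eq N x y)
    (tpath hT p q)
  have h2 : (((tpath hT p q).edges).map (wD N)).sum ≤ ∑ e ∈ H.edgeFinset, wD N e :=
    list_sum_le_finset_sum (tpath_isPath hT p q).1.edges_nodup
      (fun e he => mem_edgeFinset.mpr ((tpath hT p q).edges_subset_edgeSet he))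
      (fun e _ => wD_nonneg N e)
  linarith

lemma sum3_le_treeSum (N : Finset X) (H : SimpleGraph ↥N) [DecidableRel H.Adj]
    (hT : H.IsTree) (a b c : ↥N) :
    ∃ mv : ↥N, dist (a : X) (mv : X) + dist (b : X) (mv : X) + dist (c : X) (mv : X)
      ≤ ∑ e ∈ H.edgeFinset, wD N e := by
  classical
  obtain ⟨mv, hmv⟩ := median hT (fun e _ => wD_nonneg N e) a b c
  refine ⟨mv, ?_⟩
  have ha := walk_dist_le (fun x : ↥N => (x : X)) (wD N) (fun x y => wD_eq N x y) (tpath hT a mv)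
  have hb := walk_dist_le (fun x : ↥N => (x : X)) (wD N) (fun x y => wD_eq N x y) (tpath hT b mv)
  have hc := walk_dist_le (fun x : ↥N => (x : X)) (wD N) (fun x y => wD_eq N x y) (tpath hT c mv)
  have hta : tdist hT (wD N) a mv = (((tpath hT a mv).edges).map (wD N)).sum := rfl
  have htb : tdist hT (wD N) b mv = (((tpath hT b mv).edges).map (wD N)).sum := rfl
  have htc : tdist hT (wD N) c mv = (((tpath hT c mv).edges).map (wD N)).sum := rfl
  rw [hta, htb, htc] at hmv
  linarith

lemma le_smtW (S : Finset X) {B : ℝ}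
    (h : ∀ N : Finset X, S ⊆ N → B ≤ mstW (fun p q : ↥N => dist (p : X) (q : X))) :
    B ≤ smtW (fun x y : X => dist x y) S := by
  rw [smtW]
  have hex : { x | ∃ N : Finset X, S ⊆ N ∧
      x = mstW (fun p q : ↥N => (fun x y : X => dist x y) (p : X) (q : X)) }.Nonempty :=
    ⟨mstW (fun p q : ↥S => dist (p : X) (q : X)), ⟨S, Finset.Subset.refl S, rfl⟩⟩
  apply le_csInf hex
  rintro x ⟨N, hSN, rfl⟩
  exact h N hSN

lemma smtW_bddBelow (S : Finset X) :
    BddBelow { x | ∃ N : Finset X, S ⊆ N ∧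
      x = mstW (fun p q : ↥N => (fun x y : X => dist x y) (p : X) (q : X)) } := by
  refine ⟨0, ?_⟩
  rintro x ⟨N, _, rfl⟩
  exact mstW_nonneg' N

open Classical in
lemma smtW_le_point (S : Finset X) (m : X) :
    smtW (fun x y : X => dist x y) S ≤ ∑ y ∈ S, dist m y := by
  have hmem : mstW (fun p q : ↥(insert m S) => dist (p : X) (q : X))
      ∈ { x | ∃ N : Finset X, S ⊆ N ∧
        x = mstW (fun p q : ↥N => (fun x y : X => dist x y) (p : X) (q : X)) } :=
    ⟨insert m S, Finset.subset_insert m S, rfl⟩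
  have h1 : smtW (fun x y : X => dist x y) S
      ≤ mstW (fun p q : ↥(insert m S) => dist (p : X) (q : X)) := by
    rw [smtW]
    exact csInf_le (smtW_bddBelow S) hmem
  have h2 := mstW_le_star (insert m S) m (Finset.mem_insert_self m S)
  have h3 : ∑ y ∈ (insert m S).erase m, dist m y ≤ ∑ y ∈ S, dist m y := by
    apply Finset.sum_le_sum_of_subset_of_nonneg
    · intro y hy
      rw [Finset.mem_erase, Finset.mem_insert] at hy
      rcases hy.2 with rfl | h
      · exact absurd rfl hy.1
      · exact h
    · intro y _ _
      exact dist_nonneg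
  exact le_trans h1 (le_trans h2 h3)

open Classical in
lemma smtW_ge_dist (S : Finset X) (p q : X) (hp : p ∈ S) (hq : q ∈ S) :
    dist p q ≤ smtW (fun x y : X => dist x y) S := by
  apply le_smtW
  intro N hSN
  haveI : Nonempty ↥N := ⟨⟨p, hSN hp⟩⟩
  apply le_mstW
  intro H inst hT
  exact dist_le_treeSum N H hT ⟨p, hSN hp⟩ ⟨q, hSN hq⟩

end SMTsec

section Euclid
variable {E : Type} [NormedAddCommGroup E] [InnerProductSpace ℝ E] [ProperSpace E]

open Classical in
lemma equilateral_vals (a b c : E) {r : ℝ} (hr : 0 < r)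
    (hab : dist a b = r) (hac : dist a c = r) (hbc : dist b c = r)
    (S : Finset E) (haS : a ∈ S) (hbS : b ∈ S) (hcS : c ∈ S)
    (hmem : ∀ x ∈ S, x = a ∨ x = b ∨ x = c) :
    mf (fun p q : ↥S => dist (p : E) (q : E)) = 3 * (r / 2) ∧
      smtW (fun x y : E => dist x y) S = Real.sqrt 3 * r := by
  classical
  haveI : Nonempty ↥S := ⟨⟨a, haS⟩⟩
  have hab' : a ≠ b := dist_pos.mp (by rw [hab]; exact hr)
  have hac' : a ≠ c := dist_pos.mp (by rw [hac]; exact hr)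
  have hbc' : b ≠ c := dist_pos.mp (by rw [hbc]; exact hr)
  have hnab : ‖a - b‖ = r := by rw [← dist_eq_norm]; exact hab
  have hnac : ‖a - c‖ = r := by rw [← dist_eq_norm]; exact hac
  have hnbc : ‖b - c‖ = r := by rw [← dist_eq_norm]; exact hbc
  have hSeq : S = insert a (insert b ({c} : Finset E)) := by
    ext x
    simp only [Finset.mem_insert, Finset.mem_singleton]
    constructor
    · intro hx
      exact hmem x hx
    · rintro (rfl | rfl | rfl)
      · exact haS
      · exact hbS
      · exact hcS
  have hcard : Fintype.card ↥S = 3 := by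
    rw [Fintype.card_coe, hSeq, Finset.card_insert_of_notMem (by simp [hab', hac']),
      Finset.card_insert_of_notMem (by simp [hbc']), Finset.card_singleton]
  have dpair : ∀ x ∈ S, ∀ y ∈ S, x ≠ y → dist x y = r := by
    intro x hx y hy hxy
    rcases hmem x hx with rfl | rfl | rfl <;> rcases hmem y hy with rfl | rfl | rfl <;>
      first
        | exact absurd rfl hxy
        | assumption
        | (rw [_root_.dist_comm]; assumption)
  have hnn : ∀ p q : ↥S, 0 ≤ dist (p : E) (q : E) := fun p q => dist_nonneg
  have hrefl : ∀ p : ↥S, dist (p : E) (p : E) = 0 := fun p => dist_self _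
  constructor
  · -- mf value
    apply le_antisymm
    · exact mf_le_of_card_three hcard hr.le hrefl
        (fun p q hpq => (dpair p.1 p.2 q.1 q.2 (fun h => hpq (Subtype.ext h))).le)
    · have h := mf_three_lb hnn hrefl (⟨a, haS⟩ : ↥S) ⟨b, hbS⟩ ⟨c, hcS⟩
      simp only at h
      rw [hab, hbc, hac] at h
      calc (3 : ℝ) * (r / 2) = (r + r + r) / 2 := by ring
        _ ≤ _ := h
  · -- smt value
    apply le_antisymm
    · -- upper bound via centroid
      set o : E := (3 : ℝ)⁻¹ • (a + b + c) with ho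
      have h1 := smtW_le_point S o
      have hda : dist o a = Real.sqrt 3 * r / 3 := by
        rw [_root_.dist_comm, dist_eq_norm]
        exact centroid_norm hr a b c hnab hnac hnbc
      have hdb : dist o b = Real.sqrt 3 * r / 3 := by
        rw [_root_.dist_comm, dist_eq_norm]
        have := centroid_norm hr b a c (by rw [norm_sub_rev]; exact hnab) hnbc hnac
        rw [show b + a + c = a + b + c from by abel] at this
        exact this
      have hdc : dist o c = Real.sqrt 3 * r / 3 := by
        rw [_root_.dist_comm, dist_eq_norm]
        have := centroid_norm hr c a b (by rw [norm_sub_rev]; exact hnac)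
          (by rw [norm_sub_rev]; exact hnbc) hnab
        rw [show c + a + b = a + b + c from by abel] at this
        exact this
      have hsum : ∑ y ∈ S, dist o y = Real.sqrt 3 * r := by
        rw [hSeq, Finset.sum_insert (by simp [hab', hac']),
          Finset.sum_insert (by simp [hbc']), Finset.sum_singleton, hda, hdb, hdc]
        ring
      rw [hsum] at h1
      exact h1
    · -- lower bound via median + equilateral_lb
      apply le_smtW
      intro N hSN
      haveI : Nonempty ↥N := ⟨⟨a, hSN haS⟩⟩
      apply le_mstW
      intro H inst hT
      obtain ⟨mv, hmv⟩ := sum3_le_treeSum N H hT ⟨a, hSN haS⟩ ⟨b, hSN hbS⟩ ⟨c, hSN hcS⟩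
      have hlb := equilateral_lb hr a b c hnab hnac hnbc (mv : E)
      rw [← dist_eq_norm, ← dist_eq_norm, ← dist_eq_norm] at hlb
      simp only at hmv
      linarith

open Classical in
lemma equilateral_ratio (a b c : E) {r : ℝ} (hr : 0 < r)
    (hab : dist a b = r) (hac : dist a c = r) (hbc : dist b c = r)
    (S : Finset E) (haS : a ∈ S) (hbS : b ∈ S) (hcS : c ∈ S)
    (hmem : ∀ x ∈ S, x = a ∨ x = b ∨ x = c) :
    mf (fun p q : ↥S => dist (p : E) (q : E)) / smtW (fun x y : E => dist x y) S
      = Real.sqrt 3 / 2 := by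
  obtain ⟨h1, h2⟩ := equilateral_vals a b c hr hab hac hbc S haS hbS hcS hmem
  rw [h1, h2, div_eq_iff (by positivity : Real.sqrt 3 * r ≠ 0)]
  linear_combination (-(r / 2)) * Real.mul_self_sqrt (by norm_num : (0:ℝ) ≤ 3)

open Classical in
lemma pair_vals (p q : E) (hpq : p ≠ q) (S : Finset E) (hpS : p ∈ S) (hqS : q ∈ S)
    (hmem : ∀ x ∈ S, x = p ∨ x = q) :
    dist p q ≤ mf (fun a b : ↥S => dist (a : E) (b : E)) ∧
      smtW (fun x y : E => dist x y) S = dist p q := by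
  classical
  haveI : Nonempty ↥S := ⟨⟨p, hpS⟩⟩
  have hnn : ∀ a b : ↥S, 0 ≤ dist (a : E) (b : E) := fun a b => dist_nonneg
  have hrefl : ∀ a : ↥S, dist (a : E) (a : E) = 0 := fun a => dist_self _
  constructor
  · exact mf_pair_lb hnn hrefl ⟨p, hpS⟩ ⟨q, hqS⟩
  · apply le_antisymm
    · have h1 := smtW_le_point S p
      have hSeq : S = insert p ({q} : Finset E) := by
        ext x
        simp only [Finset.mem_insert, Finset.mem_singleton]
        constructor
        · exact hmem x
        · rintro (rfl | rfl)
          · exact hpS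
          · exact hqS
      have hsum : ∑ y ∈ S, dist p y = dist p q := by
        rw [hSeq, Finset.sum_insert (by simp [hpq]), Finset.sum_singleton, _root_.dist_self]
        ring
      rw [hsum] at h1
      exact h1
    · exact smtW_ge_dist S p q hpS hqS

open Classical in
lemma triple_lb (p q r : E) (hpq : p ≠ q) (hpr : p ≠ r) (hqr : q ≠ r)
    (S : Finset E) (hpS : p ∈ S) (hqS : q ∈ S) (hrS : r ∈ S)
    (hmem : ∀ x ∈ S, x = p ∨ x = q ∨ x = r) :
    Real.sqrt 3 / 2
      ≤ mf (fun a b : ↥S => dist (a : E) (b : E)) / smtW (fun x y : E => dist x y) S := by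
  classical
  haveI : Nonempty ↥S := ⟨⟨p, hpS⟩⟩
  have hnn : ∀ a b : ↥S, 0 ≤ dist (a : E) (b : E) := fun a b => dist_nonneg
  have hrefl : ∀ a : ↥S, dist (a : E) (a : E) = 0 := fun a => dist_self _
  have hSeq : S = insert p (insert q ({r} : Finset E)) := by
    ext x
    simp only [Finset.mem_insert, Finset.mem_singleton]
    constructor
    · exact hmem x
    · rintro (rfl | rfl | rfl)
      · exact hpS
      · exact hqS
      · exact hrS
  have hmf : (dist p q + dist q r + dist p r) / 2 ≤ mf (fun a b : ↥S => dist (a : E) (b : E)) := by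
    have h := mf_three_lb hnn hrefl (⟨p, hpS⟩ : ↥S) ⟨q, hqS⟩ ⟨r, hrS⟩
    simpa using h
  obtain ⟨m, hm⟩ := fermat_ub p q r hpq hpr hqr
  have hsmt_le : smtW (fun x y : E => dist x y) S ≤ dist m p + dist m q + dist m r := by
    have h1 := smtW_le_point S m
    have hsum : ∑ y ∈ S, dist m y = dist m p + dist m q + dist m r := by
      rw [hSeq, Finset.sum_insert (by simp [hpq, hpr]),
        Finset.sum_insert (by simp [hqr]), Finset.sum_singleton]
      ring
    rw [hsum] at h1
    exact h1
  have hsmt_pos : 0 < smtW (fun x y : E => dist x y) S :=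
    lt_of_lt_of_le (dist_pos.mpr hpq) (smtW_ge_dist S p q hpS hqS)
  -- convert hm to dist form
  have hm' : Real.sqrt 3 * (dist m p + dist m q + dist m r)
      ≤ dist p q + dist p r + dist q r := by
    have e1 : ‖p - m‖ = dist m p := by rw [norm_sub_rev, ← dist_eq_norm]
    have e2 : ‖q - m‖ = dist m q := by rw [norm_sub_rev, ← dist_eq_norm]
    have e3 : ‖r - m‖ = dist m r := by rw [norm_sub_rev, ← dist_eq_norm]
    have e4 : ‖p - q‖ = dist p q := (dist_eq_norm p q).symm
    have e5 : ‖p - r‖ = dist p r := (dist_eq_norm p r).symm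
    have e6 : ‖q - r‖ = dist q r := (dist_eq_norm q r).symm
    rw [e1, e2, e3, e4, e5, e6] at hm
    exact hm
  rw [le_div_iff₀ hsmt_pos]
  have step1 : Real.sqrt 3 / 2 * smtW (fun x y : E => dist x y) S
      ≤ Real.sqrt 3 / 2 * (dist m p + dist m q + dist m r) :=
    mul_le_mul_of_nonneg_left hsmt_le (by positivity)
  have step2 : Real.sqrt 3 / 2 * (dist m p + dist m q + dist m r)
      ≤ (dist p q + dist q r + dist p r) / 2 := by linarith
  linarith

end Euclid


section Construction

lemma sum_two_support {n : ℕ} (f : Fin n → ℝ) (i0 i1 : Fin n) (hne : i0 ≠ i1)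
    (h0 : ∀ j, j ≠ i0 → j ≠ i1 → f j = 0) : ∑ j, f j = f i0 + f i1 := by
  rw [← Finset.sum_subset (Finset.subset_univ ({i0, i1} : Finset (Fin n)))
    (fun x _ hx => h0 x (fun h => hx (by simp [h])) (fun h => hx (by simp [h])))]
  exact Finset.sum_pair hne

lemma exists_equilateral (n : ℕ) (hn : 2 ≤ n) :
    ∃ a b c : EuclideanSpace ℝ (Fin n),
      dist a b = 1 ∧ dist a c = 1 ∧ dist b c = 1 := by
  set i0 : Fin n := ⟨0, by omega⟩ with hi0
  set i1 : Fin n := ⟨1, by omega⟩ with hi1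
  have hne : i0 ≠ i1 := by
    intro h
    have := congrArg Fin.val h
    simp [hi0, hi1] at this
  set a : EuclideanSpace ℝ (Fin n) := 0 with ha
  set b : EuclideanSpace ℝ (Fin n) := EuclideanSpace.single i0 (1 : ℝ) with hb
  set c : EuclideanSpace ℝ (Fin n) :=
    EuclideanSpace.single i0 (1 / 2 : ℝ) + EuclideanSpace.single i1 (Real.sqrt 3 / 2) with hc
  have hsq34 : (Real.sqrt 3 / 2) ^ 2 = 3 / 4 := by
    rw [div_pow, sqrt3_sq]
    norm_num
  refine ⟨a, b, c, ?_, ?_, ?_⟩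
  · rw [EuclideanSpace.dist_eq]
    have : ∀ j, j ≠ i0 → j ≠ i1 → dist (a j) (b j) ^ 2 = 0 := by
      intro j hj0 hj1
      rw [ha, hb]
      simp [EuclideanSpace.single_apply, hj0]
    rw [sum_two_support _ i0 i1 hne this]
    rw [ha, hb]
    simp [EuclideanSpace.single_apply, hne.symm, Real.dist_eq]
  · rw [EuclideanSpace.dist_eq]
    have : ∀ j, j ≠ i0 → j ≠ i1 → dist (a j) (c j) ^ 2 = 0 := by
      intro j hj0 hj1
      rw [ha, hc]
      simp [EuclideanSpace.single_apply, hj0, hj1, PiLp.add_apply]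
    rw [sum_two_support _ i0 i1 hne this]
    rw [ha, hc]
    simp only [EuclideanSpace.single_apply, PiLp.add_apply, if_pos rfl, if_neg hne.symm,
      if_neg hne, PiLp.zero_apply, Real.dist_eq, if_true]
    rw [show |(0:ℝ) - (1/2 + 0)| = 1/2 from by rw [abs_of_nonpos] <;> norm_num]
    rw [show |(0:ℝ) - (0 + Real.sqrt 3/2)| = Real.sqrt 3/2 from by
      rw [abs_of_nonpos (by simp; positivity)]
      ring]
    rw [show (1/2:ℝ)^2 + (Real.sqrt 3/2)^2 = 1 from by rw [hsq34]; norm_num]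
    exact Real.sqrt_one
  · rw [EuclideanSpace.dist_eq]
    have : ∀ j, j ≠ i0 → j ≠ i1 → dist (b j) (c j) ^ 2 = 0 := by
      intro j hj0 hj1
      rw [hb, hc]
      simp [EuclideanSpace.single_apply, hj0, hj1, PiLp.add_apply]
    rw [sum_two_support _ i0 i1 hne this]
    rw [hb, hc]
    simp only [EuclideanSpace.single_apply, PiLp.add_apply, if_pos rfl, if_neg hne.symm,
      if_neg hne, Real.dist_eq, if_true]
    rw [show |(1:ℝ) - (1/2 + 0)| = 1/2 from by rw [abs_of_nonneg] <;> norm_num]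
    rw [show |(0:ℝ) - (0 + Real.sqrt 3/2)| = Real.sqrt 3/2 from by
      rw [abs_of_nonpos (by simp; positivity)]
      ring]
    rw [show (1/2:ℝ)^2 + (Real.sqrt 3/2)^2 = 1 from by rw [hsq34]; norm_num]
    exact Real.sqrt_one

end Construction

open Classical in
theorem stmt18' (n : ℕ) (hn : 2 ≤ n) :
    ssrN (fun x y : EuclideanSpace ℝ (Fin n) => dist x y) 3 = Real.sqrt 3 / 2 ∧
    ∀ (a b c : EuclideanSpace ℝ (Fin n)) (r : ℝ), 0 < r →
      dist a b = r → dist a c = r → dist b c = r →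
      mf (fun p q : ({a, b, c} : Finset (EuclideanSpace ℝ (Fin n))) => dist p.1 q.1) /
        smtW (fun x y : EuclideanSpace ℝ (Fin n) => dist x y) {a, b, c} =
        Real.sqrt 3 / 2 := by
  have part2 : ∀ (a b c : EuclideanSpace ℝ (Fin n)) (r : ℝ), 0 < r →
      dist a b = r → dist a c = r → dist b c = r →
      mf (fun p q : ({a, b, c} : Finset (EuclideanSpace ℝ (Fin n))) => dist p.1 q.1) /
        smtW (fun x y : EuclideanSpace ℝ (Fin n) => dist x y) {a, b, c} =
        Real.sqrt 3 / 2 := by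
    intro a b c r hr hab hac hbc
    exact equilateral_ratio a b c hr hab hac hbc {a, b, c}
      (by simp) (by simp) (by simp)
      (by intro x hx; simpa using hx)
  refine ⟨?_, part2⟩
  obtain ⟨a, b, c, hab, hac, hbc⟩ := exists_equilateral n hn
  have hab' : a ≠ b := dist_pos.mp (by rw [hab]; norm_num)
  have hac' : a ≠ c := dist_pos.mp (by rw [hac]; norm_num)
  have hbc' : b ≠ c := dist_pos.mp (by rw [hbc]; norm_num)
  have hcard : ({a, b, c} : Finset (EuclideanSpace ℝ (Fin n))).card = 3 := by
    rw [Finset.card_insert_of_notMem (by simp [hab', hac']),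
      Finset.card_insert_of_notMem (by simp [hbc']), Finset.card_singleton]
  have hmemv : Real.sqrt 3 / 2 ∈ { r | ∃ S : Finset (EuclideanSpace ℝ (Fin n)),
      2 ≤ S.card ∧ S.card ≤ 3 ∧
      r = mf (fun p q : ↥S => (fun x y : EuclideanSpace ℝ (Fin n) => dist x y) (p : _) (q : _))
        / smtW (fun x y : EuclideanSpace ℝ (Fin n) => dist x y) S } := by
    refine ⟨{a, b, c}, by omega, by omega, ?_⟩
    exact (part2 a b c 1 one_pos hab hac hbc).symm
  have hlb : ∀ x ∈ { r | ∃ S : Finset (EuclideanSpace ℝ (Fin n)),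
      2 ≤ S.card ∧ S.card ≤ 3 ∧
      r = mf (fun p q : ↥S => (fun x y : EuclideanSpace ℝ (Fin n) => dist x y) (p : _) (q : _))
        / smtW (fun x y : EuclideanSpace ℝ (Fin n) => dist x y) S }, Real.sqrt 3 / 2 ≤ x := by
    rintro x ⟨S, h2, h3, rfl⟩
    rcases (by omega : S.card = 2 ∨ S.card = 3) with hc | hc
    · obtain ⟨p, q, hpq, hS⟩ := Finset.card_eq_two.mp hc
      have hpS : p ∈ S := by rw [hS]; simp
      have hqS : q ∈ S := by rw [hS]; simp
      have hmem : ∀ y ∈ S, y = p ∨ y = q := by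
        intro y hy
        rw [hS] at hy
        simpa using hy
      obtain ⟨hmf, hsmt⟩ := pair_vals p q hpq S hpS hqS hmem
      have hd : 0 < dist p q := dist_pos.mpr hpq
      rw [hsmt]
      rw [le_div_iff₀ hd]
      have h1 : Real.sqrt 3 / 2 * dist p q ≤ 1 * dist p q := by
        apply mul_le_mul_of_nonneg_right _ hd.le
        linarith [sqrt3_le_two]
      linarith
    · obtain ⟨p, q, r, hpq, hpr, hqr, hS⟩ := Finset.card_eq_three.mp hc
      have hpS : p ∈ S := by rw [hS]; simp
      have hqS : q ∈ S := by rw [hS]; simp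
      have hrS : r ∈ S := by rw [hS]; simp
      have hmem : ∀ y ∈ S, y = p ∨ y = q ∨ y = r := by
        intro y hy
        rw [hS] at hy
        simpa using hy
      exact triple_lb p q r hpq hpr hqr S hpS hqS hrS hmem
  rw [ssrN]
  exact le_antisymm (csInf_le ⟨Real.sqrt 3 / 2, hlb⟩ hmemv) (le_csInf ⟨_, hmemv⟩ hlb)

end PartD

end MFAux

open Classical in
theorem stmt18 (n : ℕ) (hn : 2 ≤ n) :
    ssrN (fun x y : EuclideanSpace ℝ (Fin n) => dist x y) 3 = Real.sqrt 3 / 2 ∧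
    ∀ (a b c : EuclideanSpace ℝ (Fin n)) (r : ℝ), 0 < r →
      dist a b = r → dist a c = r → dist b c = r →
      mf (fun p q : ({a, b, c} : Finset (EuclideanSpace ℝ (Fin n))) => dist p.1 q.1) /
        smtW (fun x y : EuclideanSpace ℝ (Fin n) => dist x y) {a, b, c} =
        Real.sqrt 3 / 2 :=
  MFAux.stmt18' n hn
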